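/- arXiv:1310.5671 — 2 statements merged into one kernel-verified Lean document; each statement's English description precedes it below -/
import Mathlib

section
/- Let x : ℕ → ℂⁿ be an injective sequence whose image E = {x_j : j ∈ ℕ} is a closed discrete subset of ℂⁿ (i.e., E has no accumulation point in ℂⁿ). Then for every sequence a : ℕ → ℂ there exists an entire function f on ℂⁿ with f(x_j) = a_j for all j ∈ ℕ. -/
open Set

noncomputable section

/-- Polynomial hull of a compact set `C ⊆ ℂⁿ`. -/
def polyHullCompact {n : ℕ} (C : Set (Fin n → ℂ)) : Set (Fin n → ℂ) :=
  {z | ∀ p : MvPolynomial (Fin n) ℂ,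
    ‖MvPolynomial.eval z p‖ ≤ sSup ((fun w => ‖MvPolynomial.eval w p‖) '' C)}

/-- Polynomial hull of a closed set `X ⊆ ℂⁿ`: union of hulls of compact subsets. -/
def polyHull {n : ℕ} (X : Set (Fin n → ℂ)) : Set (Fin n → ℂ) :=
  ⋃ C ∈ {C : Set (Fin n → ℂ) | IsCompact C ∧ C ⊆ X}, polyHullCompact C

/-- `h(X) = X̂ \ X`. -/
def hHull {n : ℕ} (X : Set (Fin n → ℂ)) : Set (Fin n → ℂ) := polyHull X \ X

/-- A closed set `X` is polynomially convex if `h(X) = ∅`. -/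
def IsPolyConvex {n : ℕ} (X : Set (Fin n → ℂ)) : Prop := hHull X = ∅

/-- `M` has bounded E-hulls if `h(K ∪ M)` is bounded for every compact `K`. -/
def HasBoundedEHulls {n : ℕ} (M : Set (Fin n → ℂ)) : Prop :=
  ∀ K : Set (Fin n → ℂ), IsCompact K → Bornology.IsBounded (hHull (K ∪ M))

/-- `M` is a Carleman continuum: entire functions approximate continuous functions
on `M` in the Whitney `C⁰` topology. -/
def IsCarleman {n : ℕ} (M : Set (Fin n → ℂ)) : Prop :=
  ∀ f : (Fin n → ℂ) → ℂ, ContinuousOn f M →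
  ∀ ε : (Fin n → ℂ) → ℝ, ContinuousOn ε M → (∀ x ∈ M, 0 < ε x) →
  ∃ g : (Fin n → ℂ) → ℂ, Differentiable ℂ g ∧ ∀ x ∈ M, ‖g x - f x‖ < ε x

namespace EntireInterpAux


open Filter Metric

/-- Cauchy estimate: derivative bounded by sup on a ball of radius 1. -/
lemma norm_fderiv_le_of_ball_bound {E : Type*} [NormedAddCommGroup E] [NormedSpace ℂ E]
    {h : E → ℂ} (hh : Differentiable ℂ h) {z : E} {C : ℝ}
    (hC : ∀ w : E, ‖w - z‖ ≤ 1 → ‖h w‖ ≤ C) : ‖fderiv ℂ h z‖ ≤ C := by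
  have hC0 : 0 ≤ C := le_trans (norm_nonneg _) (hC z (by simp))
  refine ContinuousLinearMap.opNorm_le_bound _ hC0 fun v => ?_
  rcases eq_or_ne v 0 with rfl | hv
  · simp
  · have hvn : 0 < ‖v‖ := norm_pos_iff.2 hv
    have hr : 0 < ‖v‖⁻¹ := inv_pos.2 hvn
    have hφ : Differentiable ℂ (fun t : ℂ => h (z + t • v)) :=
      hh.comp ((differentiable_id.smul_const v).const_add z)
    have hder : HasDerivAt (fun t : ℂ => h (z + t • v)) (fderiv ℂ h z v) 0 := by
      have h1 : HasDerivAt (fun t : ℂ => z + t • v) v 0 := by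
        simpa using ((hasDerivAt_id (0 : ℂ)).smul_const v).const_add z
      have h2 := (hh (z + (0 : ℂ) • v)).hasFDerivAt.comp_hasDerivAt 0 h1
      simp only [zero_smul, add_zero] at h2
      exact h2
    have hb : ∀ t ∈ sphere (0 : ℂ) ‖v‖⁻¹, ‖h (z + t • v)‖ ≤ C := by
      intro t ht
      rw [mem_sphere_zero_iff_norm] at ht
      refine hC _ ?_
      have : ‖z + t • v - z‖ = ‖t • v‖ := by congr 1; abel
      rw [this, norm_smul, ht]
      exact le_of_eq (inv_mul_cancel₀ hvn.ne')
    have key := Complex.norm_deriv_le_of_forall_mem_sphere_norm_le hr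
      hφ.diffContOnCl hb
    rw [hder.deriv] at key
    calc ‖fderiv ℂ h z v‖ ≤ C / ‖v‖⁻¹ := key
      _ = C * ‖v‖ := by field_simp

/-- Weierstrass-type: a series of entire functions with locally summable uniform bounds
is entire. -/
lemma entire_tsum {n : ℕ} (g : ℕ → (Fin n → ℂ) → ℂ) (hg : ∀ m, Differentiable ℂ (g m))
    (hbd : ∀ R : ℝ, ∃ u : ℕ → ℝ, Summable u ∧ ∀ m, ∀ z : Fin n → ℂ, ‖z‖ ≤ R → ‖g m z‖ ≤ u m) :
    Differentiable ℂ fun z => ∑' m, g m z := by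
  intro z₀
  obtain ⟨u, hu, hub⟩ := hbd (‖z₀‖ + 2)
  have hopen : IsOpen (ball (0 : Fin n → ℂ) (‖z₀‖ + 1)) := isOpen_ball
  have hpre : IsPreconnected (ball (0 : Fin n → ℂ) (‖z₀‖ + 1)) :=
    (convex_ball _ _).isPreconnected
  have hf' : ∀ (m : ℕ), ∀ z : Fin n → ℂ, z ∈ ball (0 : Fin n → ℂ) (‖z₀‖ + 1) →
      ‖fderiv ℂ (g m) z‖ ≤ u m := by
    intro m z hz
    rw [mem_ball_zero_iff] at hz
    refine norm_fderiv_le_of_ball_bound (hg m) fun w hw => hub m w ?_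
    calc ‖w‖ = ‖w - z + z‖ := by rw [sub_add_cancel]
      _ ≤ ‖w - z‖ + ‖z‖ := norm_add_le _ _
      _ ≤ ‖z₀‖ + 2 := by linarith
  have h0mem : (0 : Fin n → ℂ) ∈ ball (0 : Fin n → ℂ) (‖z₀‖ + 1) :=
    mem_ball_self (by positivity)
  have hsum0 : Summable fun m => g m 0 :=
    Summable.of_norm_bounded hu fun m => hub m 0 (by simp; positivity)
  have hz₀ : z₀ ∈ ball (0 : Fin n → ℂ) (‖z₀‖ + 1) := mem_ball_zero_iff.2 (by linarith)
  exact (hasFDerivAt_tsum_of_isPreconnected hu hopen hpre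
    (fun m z _ => (hg m z).hasFDerivAt) hf' h0mem hsum0 hz₀).differentiableAt

def dd {n : ℕ} (u v : Fin n → ℂ) : ℂ := ∑ i, u i * (starRingEnd ℂ) (v i)

lemma dd_self {n : ℕ} (v : Fin n → ℂ) : dd v v = ((∑ i, ‖v i‖ ^ 2 : ℝ) : ℂ) := by
  rw [dd]
  push_cast
  refine Finset.sum_congr rfl fun i _ => ?_
  rw [Complex.mul_conj, Complex.normSq_eq_norm_sq]
  norm_cast

lemma dd_norm_le {n : ℕ} (u v : Fin n → ℂ) : ‖dd u v‖ ≤ ∑ i, ‖u i‖ * ‖v i‖ := by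
  refine (norm_sum_le _ _).trans (Finset.sum_le_sum fun i _ => ?_)
  rw [norm_mul, RCLike.norm_conj]

lemma dd_re_le {n : ℕ} (u v : Fin n → ℂ) : (dd u v).re ≤ ∑ i, ‖u i‖ * ‖v i‖ :=
  (Complex.re_le_norm _).trans (by exact dd_norm_le u v)

lemma dd_diff {n : ℕ} (v : Fin n → ℂ) : Differentiable ℂ (fun z : Fin n → ℂ => dd z v) := by
  refine Differentiable.fun_sum fun i _ => ?_
  exact (differentiable_pi.mp differentiable_id i).mul_const _

lemma exists_bump {n : ℕ} (x : ℕ → Fin n → ℂ) (hinj : Function.Injective x) (m : ℕ) (c : ℂ) :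
    ∃ g : (Fin n → ℂ) → ℂ, Differentiable ℂ g ∧ (∀ k < m, g (x k) = 0) ∧ g (x m) = c ∧
      ∀ z : Fin n → ℂ, ‖z‖ ≤ ‖x m‖ / (n + 1) - 1 → ‖g z‖ ≤ (1 / 2 : ℝ) ^ m := by
  classical
  set w : Fin n → ℂ := x m with hw
  set ρ : ℝ := ‖w‖ / (n + 1) - 1 with hρdef
  set P : (Fin n → ℂ) → ℂ := fun z => ∏ k ∈ Finset.range m, dd (z - x k) (w - x k) with hP
  set D : ℂ := P w with hD
  set Q : ℝ := ∑ i, ‖w i‖ ^ 2 with hQdef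
  have hn1 : (0 : ℝ) < (n : ℝ) + 1 := by positivity
  have hDne : D ≠ 0 := by
    rw [hD, hP, Finset.prod_ne_zero_iff]
    intro k hk
    rw [dd_self, Ne, Complex.ofReal_eq_zero]
    have hxk : w - x k ≠ 0 := by
      rw [Ne, sub_eq_zero]
      intro h
      have := hinj h
      rw [Finset.mem_range] at hk
      omega
    obtain ⟨i, hi⟩ : ∃ i, (w - x k) i ≠ 0 := Function.ne_iff.mp hxk
    have : (0 : ℝ) < ∑ i, ‖(w - x k) i‖ ^ 2 :=
      Finset.sum_pos' (fun j _ => by positivity)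
        ⟨i, Finset.mem_univ i, pow_pos (norm_pos_iff.2 hi) 2⟩
    exact this.ne'
  -- choose the damping exponent
  obtain ⟨lam, hlam0, hlam⟩ :
      ∃ lam : ℝ, 0 ≤ lam ∧ ∀ z : Fin n → ℂ, ‖z‖ ≤ ρ →
        ‖c / D‖ * (∏ k ∈ Finset.range m, ‖dd (z - x k) (w - x k)‖) *
          Real.exp (lam * ((dd z w).re - Q)) ≤ (1 / 2 : ℝ) ^ m := by
    by_cases hρ : 0 ≤ ρ
    · set S : ℝ := ∑ i, ‖w i‖ with hS
      have hS0 : 0 ≤ S := Finset.sum_nonneg fun i _ => norm_nonneg _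
      have hwS : ‖w‖ ≤ S := by
        refine (pi_norm_le_iff_of_nonneg hS0).2 fun i => ?_
        exact Finset.single_le_sum (fun j _ => norm_nonneg _) (Finset.mem_univ i)
      have hCS : S ^ 2 ≤ (n : ℝ) * Q := by
        have h := Finset.sum_mul_sq_le_sq_mul_sq Finset.univ (fun _ : Fin n => (1 : ℝ))
          (fun i => ‖w i‖)
        simpa [hS, hQdef, Finset.card_univ, mul_comm] using h
      have hQpos : 0 < Q := by
        have hw1 : (1 : ℝ) ≤ ‖w‖ := by
          rw [hρdef] at hρ
          have h1 : 1 * ((n : ℝ) + 1) ≤ ‖w‖ := (le_div_iff₀ hn1).1 (by linarith)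
          have h2 : (0 : ℝ) ≤ (n : ℝ) := Nat.cast_nonneg n
          linarith
        have hwne : w ≠ 0 := by
          intro h
          rw [h, norm_zero] at hw1
          linarith
        obtain ⟨i, hi⟩ : ∃ i, w i ≠ 0 := Function.ne_iff.mp hwne
        exact Finset.sum_pos' (fun j _ => by positivity)
          ⟨i, Finset.mem_univ i, pow_pos (norm_pos_iff.2 hi) 2⟩
      have hδpos : 0 < Q / ((n : ℝ) + 1) := by positivity
      set A : ℝ := ∏ k ∈ Finset.range m, ((n : ℝ) * ((ρ + ‖x k‖) * (‖w‖ + ‖x k‖))) with hA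
      have hA0 : 0 ≤ A := Finset.prod_nonneg fun k _ => by positivity
      have htend : Tendsto (fun t : ℝ => ‖c / D‖ * A * Real.exp (-(t * (Q / ((n : ℝ) + 1)))))
          atTop (nhds 0) := by
        have h1 : Tendsto (fun t : ℝ => -(t * (Q / ((n : ℝ) + 1)))) atTop atBot :=
          tendsto_neg_atTop_atBot.comp (tendsto_id.atTop_mul_const hδpos)
        have h2 := Real.tendsto_exp_atBot.comp h1
        simpa using h2.const_mul (‖c / D‖ * A)
      have hevlt : ∀ᶠ t in atTop,
          ‖c / D‖ * A * Real.exp (-(t * (Q / ((n : ℝ) + 1)))) < (1 / 2 : ℝ) ^ m :=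
        htend.eventually_lt_const (by positivity)
      obtain ⟨lam, hlam0, hlamlt⟩ := ((eventually_ge_atTop (0 : ℝ)).and hevlt).exists
      refine ⟨lam, hlam0, fun z hz => ?_⟩
      have hPz : (∏ k ∈ Finset.range m, ‖dd (z - x k) (w - x k)‖) ≤ A := by
        rw [hA]
        refine Finset.prod_le_prod (fun k _ => norm_nonneg _) fun k _ => ?_
        refine (dd_norm_le _ _).trans ?_
        have hterm : ∀ i, ‖(z - x k) i‖ * ‖(w - x k) i‖ ≤ (ρ + ‖x k‖) * (‖w‖ + ‖x k‖) := by
          intro i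
          have h1 : ‖(z - x k) i‖ ≤ ρ + ‖x k‖ := by
            calc ‖(z - x k) i‖ = ‖z i - x k i‖ := rfl
              _ ≤ ‖z i‖ + ‖x k i‖ := norm_sub_le _ _
              _ ≤ ρ + ‖x k‖ := add_le_add ((norm_le_pi_norm z i).trans hz) (norm_le_pi_norm _ i)
          have h2 : ‖(w - x k) i‖ ≤ ‖w‖ + ‖x k‖ := by
            calc ‖(w - x k) i‖ = ‖w i - x k i‖ := rfl
              _ ≤ ‖w i‖ + ‖x k i‖ := norm_sub_le _ _
              _ ≤ ‖w‖ + ‖x k‖ := add_le_add (norm_le_pi_norm w i) (norm_le_pi_norm _ i)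
          exact mul_le_mul h1 h2 (norm_nonneg _) (by positivity)
        calc (∑ i, ‖(z - x k) i‖ * ‖(w - x k) i‖)
            ≤ ∑ _i : Fin n, (ρ + ‖x k‖) * (‖w‖ + ‖x k‖) := Finset.sum_le_sum fun i _ => hterm i
          _ = (n : ℝ) * ((ρ + ‖x k‖) * (‖w‖ + ‖x k‖)) := by
            rw [Finset.sum_const, Finset.card_univ, Fintype.card_fin, nsmul_eq_mul]
      have hexp : (dd z w).re - Q ≤ -(Q / ((n : ℝ) + 1)) := by
        have h1 : (dd z w).re ≤ ρ * S := by
          refine (dd_re_le z w).trans ?_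
          rw [hS, Finset.mul_sum]
          refine Finset.sum_le_sum fun i _ => ?_
          exact mul_le_mul_of_nonneg_right ((norm_le_pi_norm z i).trans hz) (norm_nonneg _)
        have h2 : ‖w‖ * S ≤ S ^ 2 := by nlinarith
        rw [hρdef] at h1
        have h3 : (‖w‖ / ((n : ℝ) + 1) - 1) * S ≤ (n : ℝ) * Q / ((n : ℝ) + 1) - S := by
          rw [sub_mul, one_mul]
          have : ‖w‖ / ((n : ℝ) + 1) * S ≤ (n : ℝ) * Q / ((n : ℝ) + 1) := by
            rw [div_mul_eq_mul_div, div_le_div_iff_of_pos_right hn1]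
            nlinarith
          linarith
        have h4 : (n : ℝ) * Q / ((n : ℝ) + 1) - Q = -(Q / ((n : ℝ) + 1)) := by
          field_simp
          ring
        calc (dd z w).re - Q ≤ (‖w‖ / ((n : ℝ) + 1) - 1) * S - Q := by linarith
          _ ≤ (n : ℝ) * Q / ((n : ℝ) + 1) - S - Q := by linarith
          _ ≤ (n : ℝ) * Q / ((n : ℝ) + 1) - Q := by linarith
          _ = -(Q / ((n : ℝ) + 1)) := h4
      calc ‖c / D‖ * (∏ k ∈ Finset.range m, ‖dd (z - x k) (w - x k)‖) *
            Real.exp (lam * ((dd z w).re - Q))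
          ≤ ‖c / D‖ * A * Real.exp (-(lam * (Q / ((n : ℝ) + 1)))) := by
            have he : lam * ((dd z w).re - Q) ≤ -(lam * (Q / ((n : ℝ) + 1))) := by
              have := mul_le_mul_of_nonneg_left hexp hlam0
              linarith [this]
            gcongr
        _ ≤ (1 / 2 : ℝ) ^ m := hlamlt.le
    · refine ⟨0, le_rfl, fun z hz => ?_⟩
      exact absurd ((norm_nonneg z).trans hz) hρ
  -- the bump function
  refine ⟨fun z => c / D * P z * Complex.exp ((lam : ℂ) * (dd z w - dd w w)), ?_, ?_, ?_, ?_⟩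
  · have hPdiff' : ∀ N : ℕ, Differentiable ℂ
        fun z : Fin n → ℂ => ∏ k ∈ Finset.range N, dd (z - x k) (w - x k) := by
      intro N
      induction N with
      | zero => simpa using differentiable_const (1 : ℂ)
      | succ N ih =>
        have heq : (fun z : Fin n → ℂ => ∏ k ∈ Finset.range (N + 1), dd (z - x k) (w - x k))
            = fun z => (∏ k ∈ Finset.range N, dd (z - x k) (w - x k)) *
              dd (z - x N) (w - x N) := by
          funext z; rw [Finset.prod_range_succ]
        rw [heq]
        exact ih.mul ((dd_diff (w - x N)).comp (differentiable_id.sub_const (x N)))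
    have hPdiff : Differentiable ℂ P := by rw [hP]; exact hPdiff' m
    have hEdiff : Differentiable ℂ fun z : Fin n → ℂ =>
        Complex.exp ((lam : ℂ) * (dd z w - dd w w)) :=
      (((dd_diff w).sub_const (dd w w)).const_mul _).cexp
    exact ((hPdiff.const_mul _).mul hEdiff)
  · intro k hk
    have hPzero : P (x k) = 0 := by
      rw [hP]
      refine Finset.prod_eq_zero (Finset.mem_range.2 hk) ?_
      simp [dd]
    show c / D * P (x k) * Complex.exp ((lam : ℂ) * (dd (x k) w - dd w w)) = 0
    rw [hPzero, mul_zero, zero_mul]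
  · show c / D * P w * Complex.exp ((lam : ℂ) * (dd w w - dd w w)) = c
    rw [← hD, sub_self, mul_zero, Complex.exp_zero, mul_one, div_mul_cancel₀ c hDne]
  · intro z hz
    have hnorm : ‖c / D * P z * Complex.exp ((lam : ℂ) * (dd z w - dd w w))‖
        = ‖c / D‖ * (∏ k ∈ Finset.range m, ‖dd (z - x k) (w - x k)‖) *
          Real.exp (lam * ((dd z w).re - Q)) := by
      rw [norm_mul, norm_mul, hP, norm_prod]
      congr 1
      rw [Complex.norm_exp]
      congr 1
      rw [dd_self w, ← hQdef]
      simp [Complex.ofReal_re]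
    rw [hnorm]
    exact hlam z hz


def recF {α : Type*} (x : ℕ → α) (a : ℕ → ℂ) (pick : ℕ → ℂ → (α → ℂ)) : ℕ → α → ℂ
  | 0 => 0
  | m + 1 => recF x a pick m + pick m (a m - recF x a pick m (x m))

end EntireInterpAux

/-- entire interpolation on a closed discrete sequence. -/
theorem entire_interpolation_on_discrete_sequence {n : ℕ} (x : ℕ → (Fin n → ℂ))
    (hinj : Function.Injective x)
    (hclosed : IsClosed (Set.range x))
    (hdisc : ∀ z : Fin n → ℂ, ¬ AccPt z (Filter.principal (Set.range x)))
    (a : ℕ → ℂ) :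
    ∃ f : (Fin n → ℂ) → ℂ, Differentiable ℂ f ∧ ∀ j : ℕ, f (x j) = a j := by
  classical
  -- the sequence escapes to infinity
  have hfin : ∀ R : ℝ, {m : ℕ | ‖x m‖ ≤ R}.Finite := by
    intro R
    by_contra hinf
    have hinf' : {m : ℕ | ‖x m‖ ≤ R}.Infinite := hinf
    set e := hinf'.natEmbedding with he
    have hmem : ∀ k : ℕ, x (e k) ∈ Metric.closedBall (0 : Fin n → ℂ) R := fun k =>
      mem_closedBall_zero_iff.2 (e k).2
    obtain ⟨z, hz, φ, hφ, hconv⟩ :=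
      (isCompact_closedBall (0 : Fin n → ℂ) R).tendsto_subseq hmem
    refine hdisc z ?_
    rw [accPt_iff_nhds]
    intro U hU
    have hUe : ∀ᶠ k in Filter.atTop, x (e (φ k)) ∈ U :=
      hconv.eventually (Filter.eventually_of_mem hU fun w hw => hw)
    obtain ⟨N, hN⟩ := Filter.eventually_atTop.1 hUe
    have hne : x (e (φ N)) ≠ z ∨ x (e (φ (N + 1))) ≠ z := by
      by_contra hcon
      push_neg at hcon
      have h1 : ((e (φ N) : ℕ)) = ((e (φ (N + 1)) : ℕ)) :=
        hinj (hcon.1.trans hcon.2.symm)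
      have h2 : φ N = φ (N + 1) := e.injective (Subtype.coe_injective h1)
      have := hφ.injective h2
      omega
    rcases hne with h | h
    · exact ⟨x (e (φ N)), ⟨hN N le_rfl, ⟨_, rfl⟩⟩, h⟩
    · exact ⟨x (e (φ (N + 1))), ⟨hN (N + 1) (by omega), ⟨_, rfl⟩⟩, h⟩
  have hev : ∀ R : ℝ, ∀ᶠ m in Filter.atTop, R ≤ ‖x m‖ / (n + 1) - 1 := by
    intro R
    have hn1 : (0 : ℝ) < (n : ℝ) + 1 := by positivity
    obtain ⟨N, hN⟩ := (hfin ((R + 1) * ((n : ℝ) + 1))).bddAbove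
    rw [Filter.eventually_atTop]
    refine ⟨N + 1, fun m hm => ?_⟩
    have hxm : ¬ ‖x m‖ ≤ (R + 1) * ((n : ℝ) + 1) := by
      intro hcon
      have : m ≤ N := hN hcon
      omega
    push_neg at hxm
    rw [le_sub_iff_add_le, le_div_iff₀ hn1]
    nlinarith
  -- the recursive construction
  have key : ∀ (m : ℕ) (c : ℂ), ∃ g : (Fin n → ℂ) → ℂ, Differentiable ℂ g ∧
      (∀ k < m, g (x k) = 0) ∧ g (x m) = c ∧
      ∀ z : Fin n → ℂ, ‖z‖ ≤ ‖x m‖ / (n + 1) - 1 → ‖g z‖ ≤ (1 / 2 : ℝ) ^ m :=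
    fun m c => EntireInterpAux.exists_bump x hinj m c
  set pick : ℕ → ℂ → ((Fin n → ℂ) → ℂ) := fun m c => (key m c).choose with hpick
  set F : ℕ → (Fin n → ℂ) → ℂ := EntireInterpAux.recF x a pick with hF
  set g : ℕ → (Fin n → ℂ) → ℂ := fun m => pick m (a m - F m (x m)) with hg
  have hFs : ∀ m, F (m + 1) = F m + g m := fun m => rfl
  have hspec : ∀ m, Differentiable ℂ (g m) ∧ (∀ k < m, g m (x k) = 0) ∧
      g m (x m) = a m - F m (x m) ∧
      ∀ z : Fin n → ℂ, ‖z‖ ≤ ‖x m‖ / (n + 1) - 1 → ‖g m z‖ ≤ (1 / 2 : ℝ) ^ m :=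
    fun m => (key m (a m - F m (x m))).choose_spec
  have hFval : ∀ m (z : Fin n → ℂ), F m z = ∑ k ∈ Finset.range m, g k z := by
    intro m
    induction m with
    | zero => intro z; simp [hF, EntireInterpAux.recF]
    | succ m ih =>
      intro z
      rw [hFs m]
      rw [Finset.sum_range_succ, ← ih z]
      rfl
  refine ⟨fun z => ∑' m, g m z, ?_, ?_⟩
  · -- differentiability
    apply EntireInterpAux.entire_tsum g (fun m => (hspec m).1)
    intro R
    have hb : ∀ m, ∃ C : ℝ, (∀ z : Fin n → ℂ, ‖z‖ ≤ R → ‖g m z‖ ≤ C) ∧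
        (R ≤ ‖x m‖ / (n + 1) - 1 → C = (1 / 2 : ℝ) ^ m) := by
      intro m
      by_cases h : R ≤ ‖x m‖ / (n + 1) - 1
      · exact ⟨(1 / 2 : ℝ) ^ m, fun z hz => (hspec m).2.2.2 z (hz.trans h), fun _ => rfl⟩
      · obtain ⟨C, hC⟩ := (isCompact_closedBall (0 : Fin n → ℂ) R).exists_bound_of_continuousOn
          ((hspec m).1.continuous.continuousOn)
        exact ⟨C, fun z hz => hC z (mem_closedBall_zero_iff.2 hz), fun hh => absurd hh h⟩
    choose u hu1 hu2 using hb
    refine ⟨u, ?_, fun m z hz => hu1 m z hz⟩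
    obtain ⟨N, hN⟩ := Filter.eventually_atTop.1 (hev R)
    refine (summable_nat_add_iff N).1 ?_
    have hueq : (fun m => u (m + N)) = fun m => (1 / 2 : ℝ) ^ (m + N) :=
      funext fun m => hu2 (m + N) (hN (m + N) (by omega))
    rw [hueq]
    have : Summable fun m : ℕ => ((1 / 2 : ℝ) ^ m * (1 / 2 : ℝ) ^ N) :=
      (summable_geometric_of_lt_one (by norm_num) (by norm_num)).mul_right _
    simpa [pow_add] using this
  · -- interpolation
    intro j
    show (∑' m, g m (x j)) = a j
    have h0 : ∀ m ∉ Finset.range (j + 1), g m (x j) = 0 := by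
      intro m hm
      rw [Finset.mem_range] at hm
      exact (hspec m).2.1 j (by omega)
    rw [tsum_eq_sum h0, ← hFval (j + 1) (x j)]
    have : F (j + 1) (x j) = F j (x j) + g j (x j) := by rw [hFs j]; rfl
    rw [this, (hspec j).2.2.1]
    ring
end
end

section
/- Let M ⊆ ℂⁿ be a closed set with bounded E-hulls. Assume that M has the following uniform approximation property: for every compact set L ⊆ ℂⁿ and every compact set C ⊆ M such that L ∪ C is polynomially convex, every continuous function on L ∪ C that is holomorphic on an open neighborhood of L can be uniformly approximated on L ∪ C by entire functions. Then for every compact set K ⊆ ℂⁿ such that K ∪ M is polynomially convex, the following Carleman-type approximation holds: for every continuous function f on K ∪ M that is holomorphic on an open neighborhood of K, and every continuous ε : K ∪ M → (0,∞), there exists an entire function g on ℂⁿ with |g(x) − f(x)| < ε(x) for all x ∈ K ∪ M. -/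
open Set

noncomputable section

section CarlAuxSec
open Metric Filter
namespace CarlAux


variable {n : ℕ}

lemma contEval (p : MvPolynomial (Fin n) ℂ) :
    Continuous fun z : Fin n → ℂ => ‖MvPolynomial.eval z p‖ :=
  Continuous.norm (MvPolynomial.continuous_eval p)

lemma subset_phc {C : Set (Fin n → ℂ)} (hC : IsCompact C) : C ⊆ polyHullCompact C := by
  intro z hz p
  exact le_csSup ((hC.image (contEval p)).bddAbove) (mem_image_of_mem _ hz)



lemma phc_mono {C D : Set (Fin n → ℂ)} (hD : IsCompact D) (h : C ⊆ D) :
    polyHullCompact C ⊆ polyHullCompact D := by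
  intro z hz p
  refine (hz p).trans ?_
  rcases C.eq_empty_or_nonempty with rfl | hne
  · simp only [image_empty]
    rw [Real.sSup_empty]
    exact Real.sSup_nonneg (by rintro x ⟨w, -, rfl⟩; positivity)
  · exact csSup_le_csSup ((hD.image (contEval p)).bddAbove) (hne.image _) (image_mono h)

lemma phc_subset_closedBall {C : Set (Fin n → ℂ)} {R : ℝ} (hR : 0 ≤ R)
    (h : C ⊆ closedBall 0 R) : polyHullCompact C ⊆ closedBall 0 R := by
  intro z hz
  rw [mem_closedBall, dist_zero_right]
  refine (pi_norm_le_iff_of_nonneg hR).2 fun i => ?_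
  have h1 := hz (MvPolynomial.X i)
  simp only [MvPolynomial.eval_X] at h1
  refine h1.trans (Real.sSup_le ?_ hR)
  rintro x ⟨w, hw, rfl⟩
  simp only [MvPolynomial.eval_X]
  have := h hw
  rw [mem_closedBall, dist_zero_right] at this
  exact (norm_le_pi_norm w i).trans this

lemma phc_isClosed (C : Set (Fin n → ℂ)) : IsClosed (polyHullCompact C) := by
  have : polyHullCompact C = ⋂ p : MvPolynomial (Fin n) ℂ,
      {z | ‖MvPolynomial.eval z p‖ ≤ sSup ((fun w => ‖MvPolynomial.eval w p‖) '' C)} := by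
    ext z; simp [polyHullCompact, mem_iInter]
  rw [this]
  exact isClosed_iInter fun p => isClosed_le (contEval p) continuous_const

lemma phc_isCompact {C : Set (Fin n → ℂ)} (hC : IsCompact C) :
    IsCompact (polyHullCompact C) := by
  obtain ⟨R, hR⟩ := hC.isBounded.subset_closedBall 0
  have hR' : C ⊆ closedBall 0 (max R 0) := hR.trans (closedBall_subset_closedBall (le_max_left _ _))
  exact (isCompact_closedBall 0 (max R 0)).of_isClosed_subset (phc_isClosed C)
    (phc_subset_closedBall (le_max_right _ _) hR')

lemma phc_idem {C : Set (Fin n → ℂ)} (hC : IsCompact C) :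
    polyHullCompact (polyHullCompact C) = polyHullCompact C := by
  refine Subset.antisymm ?_ (subset_phc (phc_isCompact hC))
  intro z hz p
  refine (hz p).trans (Real.sSup_le ?_ ?_)
  · rintro x ⟨w, hw, rfl⟩; exact hw p
  · exact Real.sSup_nonneg (by rintro x ⟨w, -, rfl⟩; positivity)

lemma phc_subset_polyHull {C X : Set (Fin n → ℂ)} (hC : IsCompact C) (h : C ⊆ X) :
    polyHullCompact C ⊆ polyHull X := by
  refine subset_biUnion_of_mem (u := fun C => polyHullCompact C) ?_
  exact ⟨hC, h⟩

lemma polyHull_subset_of_polyConvex {X : Set (Fin n → ℂ)} (hX : IsPolyConvex X) :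
    polyHull X ⊆ X := by
  intro z hz
  by_contra hzX
  have : z ∈ hHull X := ⟨hz, hzX⟩
  rw [hX] at this
  exact this

lemma isPolyConvex_phc {C : Set (Fin n → ℂ)} (hC : IsCompact C) :
    IsPolyConvex (polyHullCompact C) := by
  rw [IsPolyConvex, hHull, diff_eq_empty]
  intro z hz
  rw [polyHull, mem_iUnion₂] at hz
  obtain ⟨D, ⟨hD, hDsub⟩, hzD⟩ := hz
  have := phc_mono (phc_isCompact hC) hDsub hzD
  rwa [phc_idem hC] at this



variable {n : ℕ}

/-- Cauchy-type estimate via the Schwarz lemma: an entire function bounded by `C` on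
`closedBall z 1` has `‖fderiv ℂ h z‖ ≤ 3 * C`. -/
lemma fderiv_bound {h : (Fin n → ℂ) → ℂ} (hd : Differentiable ℂ h) {z : Fin n → ℂ}
    {C : ℝ} (hC : 0 < C) (hb : ∀ w ∈ closedBall z 1, ‖h w‖ ≤ C) :
    ‖fderiv ℂ h z‖ ≤ 3 * C := by
  refine ContinuousLinearMap.opNorm_le_bound _ (by positivity) fun v => ?_
  rcases eq_or_ne v 0 with rfl | hv
  · simp
  have hvn : 0 < ‖v‖ := norm_pos_iff.2 hv
  set ρ : ℝ := ‖v‖⁻¹ with hρ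
  have hρ0 : 0 < ρ := by positivity
  set φ : ℂ → ℂ := fun t => h (z + t • v) with hφ
  have haff : Differentiable ℂ fun t : ℂ => z + t • v :=
    (differentiable_id.smul_const v).const_add z
  have hφd : Differentiable ℂ φ := hd.comp haff
  have hmem : ∀ t ∈ ball (0:ℂ) ρ, z + t • v ∈ closedBall z 1 := by
    intro t ht
    rw [mem_ball, dist_zero_right] at ht
    rw [mem_closedBall, dist_eq_norm]
    have : ‖z + t • v - z‖ = ‖t‖ * ‖v‖ := by
      rw [add_sub_cancel_left, norm_smul]
    rw [this]
    calc ‖t‖ * ‖v‖ ≤ ρ * ‖v‖ := by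
          exact mul_le_mul_of_nonneg_right ht.le (norm_nonneg v)
      _ = 1 := by rw [hρ]; exact inv_mul_cancel₀ hvn.ne'
  have hmaps : MapsTo φ (ball (0:ℂ) ρ) (ball (φ 0) (3 * C)) := by
    intro t ht
    rw [mem_ball, dist_eq_norm]
    have h1 : ‖φ t‖ ≤ C := hb _ (hmem t ht)
    have h2 : ‖φ 0‖ ≤ C := by
      simpa [hφ] using hb z (mem_closedBall_self zero_le_one)
    calc ‖φ t - φ 0‖ ≤ ‖φ t‖ + ‖φ 0‖ := norm_sub_le _ _
      _ ≤ C + C := add_le_add h1 h2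
      _ < 3 * C := by linarith
  have hSch : ‖deriv φ 0‖ ≤ 3 * C / ρ :=
    Complex.norm_deriv_le_div_of_mapsTo_ball (hφd.differentiableOn) (hmaps.mono_right ball_subset_closedBall) hρ0
  have hder : HasDerivAt φ (fderiv ℂ h z v) 0 := by
    have h1 : HasDerivAt (fun t : ℂ => z + t • v) v 0 := by
      simpa using ((hasDerivAt_id (0:ℂ)).smul_const v).const_add z
    have h2 : HasFDerivAt h (fderiv ℂ h z) (z + (0:ℂ) • v) := by
      simpa using (hd (z + (0:ℂ) • v)).hasFDerivAt
    rw [hφ]; exact h2.comp_hasDerivAt (0:ℂ) h1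
  rw [← hder.deriv] at *
  calc ‖deriv φ 0‖ ≤ 3 * C / ρ := hSch
    _ = 3 * C * ‖v‖ := by rw [hρ, div_inv_eq_mul]

/-- Limit of entire functions with geometric increments on growing balls is entire. -/
lemma entire_limit (s : ℕ → (Fin n → ℂ) → ℂ) (hdiff : ∀ j, Differentiable ℂ (s j))
    (hinc : ∀ j : ℕ, ∀ z : Fin n → ℂ, ‖z‖ ≤ (j : ℝ) → ‖s (j+1) z - s j z‖ ≤ (2:ℝ)⁻¹ ^ j) :
    ∃ g : (Fin n → ℂ) → ℂ, Differentiable ℂ g ∧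
      ∀ z, Tendsto (fun j => s j z) atTop (nhds (g z)) := by
  -- telescoping bound for values
  have tele : ∀ (z : Fin n → ℂ) (j m : ℕ), j ≤ m → ‖z‖ ≤ (j : ℝ) →
      ‖s m z - s j z‖ ≤ 2 * ((2:ℝ)⁻¹ ^ j - (2:ℝ)⁻¹ ^ m) := by
    intro z j m hjm hz
    induction m with
    | zero => interval_cases j; simp
    | succ m ih =>
      rcases Nat.lt_or_ge j (m+1) with hlt | hge
      · have hjm' : j ≤ m := Nat.lt_succ_iff.mp hlt
        have h1 := ih hjm'
        have h2 : ‖s (m+1) z - s m z‖ ≤ (2:ℝ)⁻¹ ^ m :=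
          hinc m z (hz.trans (by exact_mod_cast Nat.cast_le.2 hjm'))
        calc ‖s (m+1) z - s j z‖ ≤ ‖s (m+1) z - s m z‖ + ‖s m z - s j z‖ := by
              simpa using norm_sub_le_norm_sub_add_norm_sub (s (m+1) z) (s m z) (s j z)
          _ ≤ (2:ℝ)⁻¹ ^ m + 2 * ((2:ℝ)⁻¹ ^ j - (2:ℝ)⁻¹ ^ m) := add_le_add h2 h1
          _ = 2 * ((2:ℝ)⁻¹ ^ j - (2:ℝ)⁻¹ ^ (m+1)) := by ring
      · have : j = m + 1 := le_antisymm hjm hge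
        subst this; simp
  -- value Cauchy sequences
  have pow_tend : Tendsto (fun j : ℕ => (2:ℝ)⁻¹ ^ j) atTop (nhds 0) :=
    tendsto_pow_atTop_nhds_zero_of_lt_one (by norm_num) (by norm_num)
  have cauchy_val : ∀ z, CauchySeq fun j => s j z := by
    intro z
    rw [Metric.cauchySeq_iff']
    intro ε hε
    obtain ⟨N1, hN1⟩ := (Metric.tendsto_atTop.1 pow_tend (ε/2) (by positivity))
    obtain ⟨N2, hN2⟩ := exists_nat_ge ‖z‖
    refine ⟨max N1 N2, fun m hm => ?_⟩
    rw [dist_eq_norm]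
    have hz : ‖z‖ ≤ ((max N1 N2 : ℕ) : ℝ) :=
      hN2.trans (by exact_mod_cast Nat.cast_le.2 (le_max_right N1 N2))
    have h1 := tele z (max N1 N2) m hm hz
    have h2 := hN1 (max N1 N2) (le_max_left N1 N2)
    rw [Real.dist_eq, sub_zero, abs_of_pos (by positivity)] at h2
    have hp : (0:ℝ) ≤ (2:ℝ)⁻¹ ^ m := by positivity
    nlinarith
  choose g hg using fun z => cauchySeq_tendsto_of_complete (cauchy_val z)
  refine ⟨g, ?_, hg⟩
  -- derivative estimates
  have dinc : ∀ (m : ℕ) (z : Fin n → ℂ), ‖z‖ + 1 ≤ (m : ℝ) →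
      ‖fderiv ℂ (s (m+1)) z - fderiv ℂ (s m) z‖ ≤ 3 * (2:ℝ)⁻¹ ^ m := by
    intro m z hz
    have hsub : Differentiable ℂ (fun w => s (m+1) w - s m w) := (hdiff (m+1)).sub (hdiff m)
    have hb : ∀ w ∈ closedBall z 1, ‖s (m+1) w - s m w‖ ≤ (2:ℝ)⁻¹ ^ m := by
      intro w hw
      rw [mem_closedBall, dist_eq_norm] at hw
      refine hinc m w ?_
      calc ‖w‖ = ‖w - z + z‖ := by ring_nf
        _ ≤ ‖w - z‖ + ‖z‖ := norm_add_le _ _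
        _ ≤ 1 + ‖z‖ := by linarith
        _ ≤ (m : ℝ) := by linarith
    have := fderiv_bound hsub (C := (2:ℝ)⁻¹ ^ m) (by positivity) hb
    rwa [fderiv_fun_sub (hdiff (m+1) z) (hdiff m z)] at this
  -- telescoping for derivatives
  have dtele : ∀ (z : Fin n → ℂ) (j m : ℕ), j ≤ m → ‖z‖ + 1 ≤ (j : ℝ) →
      ‖fderiv ℂ (s m) z - fderiv ℂ (s j) z‖ ≤ 6 * ((2:ℝ)⁻¹ ^ j - (2:ℝ)⁻¹ ^ m) := by
    intro z j m hjm hz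
    induction m with
    | zero => interval_cases j; simp
    | succ m ih =>
      rcases Nat.lt_or_ge j (m+1) with hlt | hge
      · have hjm' : j ≤ m := Nat.lt_succ_iff.mp hlt
        have h1 := ih hjm'
        have h2 := dinc m z (hz.trans (by exact_mod_cast Nat.cast_le.2 hjm'))
        calc ‖fderiv ℂ (s (m+1)) z - fderiv ℂ (s j) z‖
            ≤ ‖fderiv ℂ (s (m+1)) z - fderiv ℂ (s m) z‖ +
              ‖fderiv ℂ (s m) z - fderiv ℂ (s j) z‖ := by
              simpa using norm_sub_le_norm_sub_add_norm_sub (fderiv ℂ (s (m+1)) z)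
                (fderiv ℂ (s m) z) (fderiv ℂ (s j) z)
          _ ≤ 3 * (2:ℝ)⁻¹ ^ m + 6 * ((2:ℝ)⁻¹ ^ j - (2:ℝ)⁻¹ ^ m) := add_le_add h2 h1
          _ ≤ 6 * ((2:ℝ)⁻¹ ^ j - (2:ℝ)⁻¹ ^ (m+1)) := by
              have : (2:ℝ)⁻¹ ^ (m+1) = (2:ℝ)⁻¹ ^ m * 2⁻¹ := pow_succ _ _
              nlinarith [pow_nonneg (by norm_num : (0:ℝ) ≤ 2⁻¹) m]
      · have : j = m + 1 := le_antisymm hjm hge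
        subst this; simp
  have cauchy_der : ∀ z, CauchySeq fun j => fderiv ℂ (s j) z := by
    intro z
    rw [Metric.cauchySeq_iff']
    intro ε hε
    obtain ⟨N1, hN1⟩ := (Metric.tendsto_atTop.1 pow_tend (ε/6) (by positivity))
    obtain ⟨N2, hN2⟩ := exists_nat_ge (‖z‖ + 1)
    refine ⟨max N1 N2, fun m hm => ?_⟩
    rw [dist_eq_norm]
    have hz : ‖z‖ + 1 ≤ ((max N1 N2 : ℕ) : ℝ) :=
      hN2.trans (by exact_mod_cast Nat.cast_le.2 (le_max_right N1 N2))
    have h1 := dtele z (max N1 N2) m hm hz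
    have h2 := hN1 (max N1 N2) (le_max_left N1 N2)
    rw [Real.dist_eq, sub_zero, abs_of_pos (by positivity)] at h2
    have hp : (0:ℝ) ≤ (2:ℝ)⁻¹ ^ m := by positivity
    nlinarith
  choose g' hg' using fun z => cauchySeq_tendsto_of_complete (cauchy_der z)
  -- differentiability at each point
  intro z₀
  set Ω : Set (Fin n → ℂ) := ball 0 (‖z₀‖ + 1) with hΩ
  have hz₀Ω : z₀ ∈ Ω := by
    rw [hΩ, mem_ball, dist_zero_right]; linarith
  have hTU : TendstoUniformlyOn (fun j z => fderiv ℂ (s j) z) g' atTop Ω := by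
    rw [Metric.tendstoUniformlyOn_iff]
    intro ε hε
    obtain ⟨N1, hN1⟩ := (Metric.tendsto_atTop.1 pow_tend (ε/6) (by positivity))
    obtain ⟨N2, hN2⟩ := exists_nat_ge (‖z₀‖ + 2)
    rw [eventually_atTop]
    refine ⟨max N1 N2, fun j hj z hzΩ => ?_⟩
    have hzb : ‖z‖ + 1 ≤ (j:ℝ) := by
      rw [hΩ, mem_ball, dist_zero_right] at hzΩ
      have : ((max N1 N2 : ℕ):ℝ) ≤ (j:ℝ) := by exact_mod_cast Nat.cast_le.2 hj
      have h2 : ((N2:ℕ):ℝ) ≤ ((max N1 N2 : ℕ):ℝ) := by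
        exact_mod_cast Nat.cast_le.2 (le_max_right N1 N2)
      linarith
    -- dist (g' z) (fderiv (s j) z) ≤ 6 * (2⁻¹)^j
    have hlim : Tendsto (fun m => dist (fderiv ℂ (s m) z) (fderiv ℂ (s j) z)) atTop
        (nhds (dist (g' z) (fderiv ℂ (s j) z))) :=
      ((hg' z).dist tendsto_const_nhds)
    have hbd : dist (g' z) (fderiv ℂ (s j) z) ≤ 6 * (2:ℝ)⁻¹ ^ j := by
      refine le_of_tendsto hlim ?_
      rw [eventually_atTop]
      refine ⟨j, fun m hm => ?_⟩
      rw [dist_eq_norm]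
      have := dtele z j m hm hzb
      have hp : (0:ℝ) ≤ (2:ℝ)⁻¹ ^ m := by positivity
      nlinarith
    have h2 := hN1 j (le_of_max_le_left hj)
    rw [Real.dist_eq, sub_zero, abs_of_pos (by positivity)] at h2
    calc dist (g' z) (fderiv ℂ (s j) z) ≤ 6 * (2:ℝ)⁻¹ ^ j := hbd
      _ < ε := by linarith
  have := hasFDerivAt_of_tendstoUniformlyOn (isOpen_ball) hTU
    (fun j z hz => (hdiff j z).hasFDerivAt)
    (fun z _ => hg z) hz₀Ω
  exact this.differentiableAt

end CarlAux
end CarlAuxSec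

open Filter in

set_option maxHeartbeats 1600000 in
/-- bounded E-hulls plus uniform approximation on compact pieces implies
Carleman-type approximation on `K ∪ M` for polynomially convex `K ∪ M`. -/
theorem carleman_approx_of_boundedEHulls_and_uniform_approx {n : ℕ}
    (M : Set (Fin n → ℂ)) (hMclosed : IsClosed M) (hBE : HasBoundedEHulls M)
    (hApprox : ∀ L C : Set (Fin n → ℂ), IsCompact L → IsCompact C → C ⊆ M →
      IsPolyConvex (L ∪ C) →
      ∀ f : (Fin n → ℂ) → ℂ, ContinuousOn f (L ∪ C) →
      (∃ U : Set (Fin n → ℂ), IsOpen U ∧ L ⊆ U ∧ DifferentiableOn ℂ f U) →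
      ∀ δ : ℝ, 0 < δ →
      ∃ g : (Fin n → ℂ) → ℂ, Differentiable ℂ g ∧ ∀ x ∈ L ∪ C, ‖g x - f x‖ < δ) :
    ∀ K : Set (Fin n → ℂ), IsCompact K → IsPolyConvex (K ∪ M) →
    ∀ f : (Fin n → ℂ) → ℂ, ContinuousOn f (K ∪ M) →
    (∃ U : Set (Fin n → ℂ), IsOpen U ∧ K ⊆ U ∧ DifferentiableOn ℂ f U) →
    ∀ ε : (Fin n → ℂ) → ℝ, ContinuousOn ε (K ∪ M) → (∀ x ∈ K ∪ M, 0 < ε x) →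
    ∃ g : (Fin n → ℂ) → ℂ, Differentiable ℂ g ∧ ∀ x ∈ K ∪ M, ‖g x - f x‖ < ε x := by
  intro K hK hPCKM f hf hfU ε hεc hεpos
  classical
  have hKMclosed : IsClosed (K ∪ M) := hK.isClosed.union hMclosed
  -- Tietze extension of f
  obtain ⟨Fc, hFc⟩ := ContinuousMap.exists_restrict_eq (Y := ℂ) hKMclosed
    ⟨(K ∪ M).restrict f, hf.restrict⟩
  have hF : ∀ x ∈ K ∪ M, Fc x = f x := by
    intro x hx
    have := ContinuousMap.congr_fun hFc ⟨x, hx⟩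
    exact this
  -- radius of K
  obtain ⟨kR0, hkR0⟩ := hK.isBounded.subset_closedBall 0
  set kR : ℝ := max kR0 0 with hkRdef
  have hkR : K ⊆ Metric.closedBall 0 kR :=
    hkR0.trans (Metric.closedBall_subset_closedBall (le_max_left _ _))
  have hkRnn : (0:ℝ) ≤ kR := le_max_right _ _
  -- bounding function for E-hulls
  have hRf0 : ∀ r : ℝ, ∃ ρ : ℝ, hHull (Metric.closedBall 0 r ∪ M) ⊆ Metric.closedBall 0 ρ :=
    fun r => (hBE (Metric.closedBall 0 r) (isCompact_closedBall 0 r)).subset_closedBall 0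
  choose Rf0 hRf0' using hRf0
  set Rf : ℝ → ℝ := fun r => max (Rf0 r) r with hRfdef
  have hRf : ∀ r : ℝ, hHull (Metric.closedBall 0 r ∪ M) ⊆ Metric.closedBall 0 (Rf r) :=
    fun r => (hRf0' r).trans (Metric.closedBall_subset_closedBall (le_max_left _ _))
  have hRfge : ∀ r : ℝ, r ≤ Rf r := fun r => le_max_right _ _
  -- radii
  set r : ℕ → ℝ := fun j => kR + j with hrdef
  have hr_nn : ∀ j, (0:ℝ) ≤ r j := fun j => by
    have : (0:ℝ) ≤ (j:ℝ) := Nat.cast_nonneg j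
    simp only [hrdef]; positivity
  set t : ℕ → ℝ := fun j => Nat.rec (max (Rf (r 1) + 2) 1)
    (fun j tj => max (tj + 1) (max (Rf (r (j+2)) + 2) (r (j+1)))) j with htdef
  have ht_succ : ∀ j, t (j+1) = max (t j + 1) (max (Rf (r (j+2)) + 2) (r (j+1))) := fun j => rfl
  have ht0 : t 0 = max (Rf (r 1) + 2) 1 := rfl
  have ht_step : ∀ j, t j + 1 ≤ t (j+1) := fun j => by rw [ht_succ]; exact le_max_left _ _
  have ht_mono : Monotone t := monotone_nat_of_le_succ (fun j => by linarith [ht_step j])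
  have ht_core : ∀ j, r (j+1) ≤ t (j+1) := fun j => by
    rw [ht_succ]; exact le_max_of_le_right (le_max_right _ _)
  have ht_R : ∀ j, Rf (r (j+1)) + 2 ≤ t j := by
    intro j
    cases j with
    | zero => rw [ht0]; exact le_max_left _ _
    | succ j => rw [ht_succ]; exact le_max_of_le_right (le_max_left _ _)
  have ht_ge : ∀ j : ℕ, (j:ℝ) ≤ t j := by
    intro j
    induction j with
    | zero =>
      rw [Nat.cast_zero, ht0]
      exact le_max_of_le_right zero_le_one
    | succ j ih =>
      have := ht_step j
      push_cast
      linarith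
  have ht_nn : ∀ j, (0:ℝ) ≤ t j := fun j => (Nat.cast_nonneg j).trans (ht_ge j)
  -- regions
  set Reg : ℕ → Set (Fin n → ℂ) := fun i => K ∪ (M ∩ Metric.closedBall 0 (t i)) with hRegdef
  have hRegKM : ∀ i, Reg i ⊆ K ∪ M := fun i =>
    union_subset subset_union_left (inter_subset_left.trans subset_union_right)
  have hRegCpt : ∀ i, IsCompact (Reg i) := fun i =>
    hK.union ((isCompact_closedBall 0 (t i)).inter_left hMclosed)
  have hRegMono : ∀ i j, i ≤ j → Reg i ⊆ Reg j := by
    intro i j hij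
    exact union_subset_union_right _
      (inter_subset_inter_right _ (Metric.closedBall_subset_closedBall (ht_mono hij)))
  -- minima of ε
  set m : ℕ → ℝ := fun i => sInf (insert 1 (ε '' Reg i)) with hmdef
  have hm_cpt : ∀ i, IsCompact (insert (1:ℝ) (ε '' Reg i)) := fun i =>
    ((hRegCpt i).image_of_continuousOn (hεc.mono (hRegKM i))).insert 1
  have hm_mem : ∀ i, m i ∈ insert (1:ℝ) (ε '' Reg i) := fun i =>
    (hm_cpt i).sInf_mem (insert_nonempty _ _)
  have hm_pos : ∀ i, 0 < m i := by
    intro i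
    rcases hm_mem i with h | ⟨x, hx, hεx⟩
    · rw [h]; norm_num
    · rw [← hεx]; exact hεpos x (hRegKM i hx)
  have hm_le_one : ∀ i, m i ≤ 1 := fun i =>
    csInf_le (hm_cpt i).bddBelow (mem_insert _ _)
  have hm_le : ∀ i, ∀ x ∈ Reg i, m i ≤ ε x := fun i x hx =>
    csInf_le (hm_cpt i).bddBelow (mem_insert_of_mem _ (mem_image_of_mem _ hx))
  -- decreasing minima
  set μ : ℕ → ℝ := fun i => Nat.rec (m 0) (fun i a => min a (m (i+1))) i with hμdef
  have hμ0 : μ 0 = m 0 := rfl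
  have hμsucc : ∀ i, μ (i+1) = min (μ i) (m (i+1)) := fun i => rfl
  have hμ_pos : ∀ i, 0 < μ i := by
    intro i
    induction i with
    | zero => rw [hμ0]; exact hm_pos 0
    | succ i ih => rw [hμsucc]; exact lt_min ih (hm_pos (i+1))
  have hμ_le_m : ∀ i, μ i ≤ m i := by
    intro i
    cases i with
    | zero => rw [hμ0]
    | succ i => rw [hμsucc]; exact min_le_right _ _
  have hμ_anti : Antitone μ := antitone_nat_of_succ_le (fun i => by
    rw [hμsucc]; exact min_le_left _ _)
  have hμ_le_one : ∀ i, μ i ≤ 1 := fun i => (hμ_le_m i).trans (hm_le_one i)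
  -- error budgets
  set δ : ℕ → ℝ := fun j => μ j * (2:ℝ)⁻¹ ^ (j+2) with hδdef
  have hδ_pos : ∀ j, 0 < δ j := fun j => by
    have := hμ_pos j
    have h2 : (0:ℝ) < (2:ℝ)⁻¹ ^ (j+2) := by positivity
    positivity
  -- entry stage
  have hex : ∀ x ∈ K ∪ M, ∃ i, x ∈ Reg i := by
    intro x hx
    rcases hx with hxK | hxM
    · exact ⟨0, Or.inl hxK⟩
    · obtain ⟨i, hi⟩ := exists_nat_ge ‖x‖
      refine ⟨i, Or.inr ⟨hxM, ?_⟩⟩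
      rw [Metric.mem_closedBall, dist_zero_right]
      exact hi.trans (ht_ge i)
  set e : (Fin n → ℂ) → ℕ := fun x => if h : ∃ i, x ∈ Reg i then Nat.find h else 0
    with hedef
  have he_mem : ∀ x, (∃ i, x ∈ Reg i) → x ∈ Reg (e x) := by
    intro x h
    simp only [hedef, dif_pos h]
    exact Nat.find_spec h
  have he_min : ∀ x (i : ℕ), x ∈ Reg i → e x ≤ i := by
    intro x i hxi
    have h : ∃ i, x ∈ Reg i := ⟨i, hxi⟩
    simp only [hedef, dif_pos h]
    exact Nat.find_min' h hxi
  -- the invariant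
  set Inv : ℕ → ((Fin n → ℂ) → ℂ) → Prop := fun j s => Differentiable ℂ s ∧
    ∀ x ∈ Reg j, ‖s x - f x‖ < μ (e x) * ((2:ℝ)⁻¹ ^ (e x + 1) - (2:ℝ)⁻¹ ^ (j+2))
    with hInvdef
  -- base stage
  have base : ∃ s0, Inv 0 s0 := by
    set core : Set (Fin n → ℂ) := K ∪ (M ∩ Metric.closedBall 0 (t 0)) with hcoredef
    have hcoreC : IsCompact core := hRegCpt 0
    set D : Set (Fin n → ℂ) := polyHullCompact core with hDdef
    have hDC : IsCompact D := CarlAux.phc_isCompact hcoreC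
    have hcoreD : core ⊆ D := CarlAux.subset_phc hcoreC
    have hDKM : D ⊆ K ∪ M := by
      refine (CarlAux.phc_subset_polyHull hcoreC (hRegKM 0)).trans ?_
      exact CarlAux.polyHull_subset_of_polyConvex hPCKM
    set C : Set (Fin n → ℂ) := D ∩ M with hCdef
    have hLC : K ∪ C = D := by
      apply Subset.antisymm
      · exact union_subset ((subset_union_left).trans hcoreD) inter_subset_left
      · intro z hz
        rcases hDKM hz with hzK | hzM
        · exact Or.inl hzK
        · exact Or.inr ⟨hz, hzM⟩
    have hPC : IsPolyConvex (K ∪ C) := by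
      rw [hLC]; exact CarlAux.isPolyConvex_phc hcoreC
    obtain ⟨s0, hs0d, hs0b⟩ := hApprox K C hK (hDC.inter_right hMclosed) inter_subset_right
      hPC f (hf.mono (by rw [hLC]; exact hDKM)) hfU (δ 0) (hδ_pos 0)
    refine ⟨s0, hs0d, ?_⟩
    intro x hx
    have hx0 : x ∈ Reg 0 := hx
    have he0 : e x = 0 := Nat.le_zero.mp (he_min x 0 hx0)
    have hxD : x ∈ K ∪ C := by rw [hLC]; exact hcoreD hx
    have := hs0b x hxD
    rw [he0]
    calc ‖s0 x - f x‖ < δ 0 := this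
      _ = μ 0 * ((2:ℝ)⁻¹ ^ (0 + 1) - (2:ℝ)⁻¹ ^ (0 + 2)) := by
        simp only [hδdef]; norm_num
  -- inductive step
  have step : ∀ (j : ℕ) (s : (Fin n → ℂ) → ℂ), ∃ s' : (Fin n → ℂ) → ℂ,
      Inv j s → (Inv (j+1) s' ∧
        ∀ x ∈ Metric.closedBall (0 : Fin n → ℂ) (r (j+1)), ‖s' x - s x‖ < δ (j+1)) := by
    intro j s
    by_cases hInv : Inv j s
    swap
    · exact ⟨s, fun h => absurd h hInv⟩
    obtain ⟨hsd, hsb⟩ := hInv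
    set R : ℝ := Rf (r (j+1)) with hRdef
    set R' : ℝ := R + 1 with hR'def
    have hrR : r (j+1) ≤ R := hRfge _
    have hRnn : (0:ℝ) ≤ R := (hr_nn _).trans hrR
    have htc : r (j+1) ≤ t (j+1) := ht_core j
    set core : Set (Fin n → ℂ) :=
      Metric.closedBall 0 (r (j+1)) ∪ (M ∩ Metric.closedBall 0 (t (j+1))) with hcoredef
    have hcoreC : IsCompact core :=
      (isCompact_closedBall _ _).union ((isCompact_closedBall 0 (t (j+1))).inter_left hMclosed)
    set D : Set (Fin n → ℂ) := polyHullCompact core with hDdef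
    have hDC : IsCompact D := CarlAux.phc_isCompact hcoreC
    have hcoreD : core ⊆ D := CarlAux.subset_phc hcoreC
    have hDt : D ⊆ Metric.closedBall 0 (t (j+1)) := by
      refine CarlAux.phc_subset_closedBall (ht_nn (j+1)) ?_
      exact union_subset (Metric.closedBall_subset_closedBall htc) inter_subset_right
    have hDsub2 : D ⊆ M ∪ Metric.closedBall 0 R := by
      have h1 : D ⊆ polyHull (Metric.closedBall 0 (r (j+1)) ∪ M) :=
        CarlAux.phc_subset_polyHull hcoreC
          (union_subset subset_union_left (inter_subset_left.trans subset_union_right))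
      intro z hz
      rcases Classical.em (z ∈ Metric.closedBall 0 (r (j+1)) ∪ M) with hzY | hzY
      · rcases hzY with hzB | hzM
        · exact Or.inr (Metric.closedBall_subset_closedBall hrR hzB)
        · exact Or.inl hzM
      · have : z ∈ hHull (Metric.closedBall 0 (r (j+1)) ∪ M) := ⟨h1 hz, hzY⟩
        exact Or.inr (hRf _ this)
    set L : Set (Fin n → ℂ) := D ∩ Metric.closedBall 0 R with hLdef
    set C : Set (Fin n → ℂ) := M ∩ Metric.closedBall 0 (t (j+1)) with hCdef
    have hCD : C ⊆ D := (subset_union_right).trans hcoreD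
    have hLC : L ∪ C = D := by
      apply Subset.antisymm
      · exact union_subset inter_subset_left hCD
      · intro z hz
        rcases hDsub2 hz with hzM | hzB
        · exact Or.inr ⟨hzM, hDt hz⟩
        · exact Or.inl ⟨hz, hzB⟩
    have hPC : IsPolyConvex (L ∪ C) := by
      rw [hLC]; exact CarlAux.isPolyConvex_phc hcoreC
    -- cutoff function
    set χ : (Fin n → ℂ) → ℝ := fun x => max 0 (min 1 (R' + 1 - ‖x‖)) with hχdef
    have hχcont : Continuous χ :=
      continuous_const.max (continuous_const.min (continuous_const.sub continuous_norm))
    have hχ0 : ∀ x, 0 ≤ χ x := fun x => le_max_left _ _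
    have hχle1 : ∀ x, χ x ≤ 1 := fun x => max_le zero_le_one (min_le_left _ _)
    have hχ1 : ∀ x : Fin n → ℂ, ‖x‖ ≤ R' → χ x = 1 := by
      intro x hx
      have h1 : (1:ℝ) ≤ R' + 1 - ‖x‖ := by linarith
      simp only [hχdef]
      rw [min_eq_left h1]
      exact max_eq_right zero_le_one
    have hχzero : ∀ x : Fin n → ℂ, R' + 1 ≤ ‖x‖ → χ x = 0 := by
      intro x hx
      have h1 : R' + 1 - ‖x‖ ≤ 0 := by linarith
      simp only [hχdef]
      rw [min_eq_right (h1.trans zero_le_one)]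
      exact max_eq_left h1
    -- glued function
    set G : (Fin n → ℂ) → ℂ := fun x => Fc x + (χ x : ℂ) * (s x - Fc x) with hGdef
    have hGcont : Continuous G :=
      Fc.continuous.add ((Complex.continuous_ofReal.comp hχcont).mul
        (hsd.continuous.sub Fc.continuous))
    have hGeq : ∀ x : Fin n → ℂ, ‖x‖ ≤ R' → G x = s x := by
      intro x hx
      simp only [hGdef, hχ1 x hx, Complex.ofReal_one, one_mul]
      ring
    have hGU : DifferentiableOn ℂ G (Metric.ball 0 R') := by
      refine DifferentiableOn.congr (hsd.differentiableOn) ?_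
      intro x hx
      rw [Metric.mem_ball, dist_zero_right] at hx
      exact hGeq x hx.le
    have hLU : L ⊆ Metric.ball 0 R' := by
      intro x hx
      rw [Metric.mem_ball, dist_zero_right]
      have := hx.2
      rw [Metric.mem_closedBall, dist_zero_right] at this
      rw [hR'def]; linarith
    obtain ⟨s', hs'd, hs'b⟩ := hApprox L C (hDC.inter_right Metric.isClosed_closedBall)
      ((isCompact_closedBall 0 (t (j+1))).inter_left hMclosed) inter_subset_left hPC
      G hGcont.continuousOn ⟨Metric.ball 0 R', Metric.isOpen_ball, hLU, hGU⟩
      (δ (j+1)) (hδ_pos (j+1))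
    rw [hLC] at hs'b
    refine ⟨s', fun _ => ⟨⟨hs'd, ?_⟩, ?_⟩⟩
    · -- invariant at stage j+1
      intro x hx
      have hxKM : x ∈ K ∪ M := hRegKM (j+1) hx
      have hFx : Fc x = f x := hF x hxKM
      have hGf : G x - f x = (χ x : ℂ) * (s x - f x) := by
        simp only [hGdef, hFx]; ring
      have hkey : ∀ hxD : x ∈ D, ‖s' x - f x‖ < δ (j+1) + χ x * ‖s x - f x‖ := by
        intro hxD
        have h1 := hs'b x hxD
        calc ‖s' x - f x‖ ≤ ‖s' x - G x‖ + ‖G x - f x‖ := by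
              simpa using norm_sub_le_norm_sub_add_norm_sub (s' x) (G x) (f x)
          _ < δ (j+1) + ‖G x - f x‖ := by linarith
          _ = δ (j+1) + χ x * ‖s x - f x‖ := by
              rw [hGf, norm_mul, Complex.norm_real, Real.norm_eq_abs, abs_of_nonneg (hχ0 x)]
      -- common arithmetic helper
      have harith : ∀ i : ℕ, i ≤ j →
          δ (j+1) + μ i * ((2:ℝ)⁻¹ ^ (i+1) - (2:ℝ)⁻¹ ^ (j+2)) ≤
          μ i * ((2:ℝ)⁻¹ ^ (i+1) - (2:ℝ)⁻¹ ^ (j+3)) := by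
        intro i hij
        have h1 : μ (j+1) ≤ μ i := hμ_anti (show i ≤ j+1 by omega)
        have h2 : (2:ℝ)⁻¹ ^ (j+2) = 2 * (2:ℝ)⁻¹ ^ (j+3) := by
          rw [show j+3 = (j+2)+1 by omega, pow_succ]; ring
        have h3 : (0:ℝ) < (2:ℝ)⁻¹ ^ (j+3) := by positivity
        simp only [hδdef]
        rw [show j+1+2 = j+3 by omega, h2]
        nlinarith [mul_nonneg (sub_nonneg.2 h1) h3.le]
      rcases hx with hxK | hxMC
      · -- x ∈ K
        have hxcore : x ∈ core := Or.inl (by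
          refine hkR.trans (Metric.closedBall_subset_closedBall ?_) hxK
          simp only [hrdef]
          have : (0:ℝ) ≤ ((j:ℝ)+1) := by positivity
          push_cast; linarith)
        have hxD : x ∈ D := hcoreD hxcore
        have hxnorm : ‖x‖ ≤ R' := by
          have := hkR hxK
          rw [Metric.mem_closedBall, dist_zero_right] at this
          have h2 : kR ≤ r (j+1) := by
            simp only [hrdef]; push_cast
            have : (0:ℝ) ≤ ((j:ℝ)+1) := by positivity
            linarith
          rw [hR'def]; linarith
      -- bound
        have hxReg : x ∈ Reg j := Or.inl hxK
        have hei : e x ≤ j := he_min x j hxReg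
        have hold := hsb x hxReg
        have h1 := hkey hxD
        have h2 : χ x * ‖s x - f x‖ ≤ ‖s x - f x‖ := by
          have := hχle1 x
          nlinarith [norm_nonneg (s x - f x), hχ0 x]
        have := harith (e x) hei
        linarith
      · -- x ∈ M ∩ closedBall 0 (t (j+1))
        have hxD : x ∈ D := hCD hxMC
        have h1 := hkey hxD
        rcases le_or_gt ‖x‖ (t j) with hxt | hxt
        · -- old region
          have hxReg : x ∈ Reg j := Or.inr ⟨hxMC.1, by
            rw [Metric.mem_closedBall, dist_zero_right]; exact hxt⟩
          have hei : e x ≤ j := he_min x j hxReg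
          have hold := hsb x hxReg
          have h2 : χ x * ‖s x - f x‖ ≤ ‖s x - f x‖ := by
            have := hχle1 x
            nlinarith [norm_nonneg (s x - f x), hχ0 x]
          have := harith (e x) hei
          linarith
        · -- fresh region
          have hxnK : x ∉ K := by
            intro hxK
            have := hkR hxK
            rw [Metric.mem_closedBall, dist_zero_right] at this
            have h2 : kR ≤ r (j+1) := by
              rw [hrdef]; push_cast
              have : (0:ℝ) ≤ ((j:ℝ)+1) := by positivity
              linarith
            have h3 := ht_R j
            rw [← hRdef] at h3
            have h4 := hRfge (r (j+1))
            rw [← hRdef] at h4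
            linarith
          have hχx : χ x = 0 := by
            refine hχzero x ?_
            have h3 := ht_R j
            rw [← hRdef] at h3
            rw [hR'def]; linarith
          have hxReg1 : x ∈ Reg (j+1) := Or.inr hxMC
          have heub : e x ≤ j + 1 := he_min x (j+1) hxReg1
          have helb : j + 1 ≤ e x := by
            by_contra hlt
            push_neg at hlt
            have hej : e x ≤ j := by omega
            have hxe : x ∈ Reg (e x) := he_mem x ⟨j+1, hxReg1⟩
            rcases hxe with h | h
            · exact hxnK h
            · have := h.2
              rw [Metric.mem_closedBall, dist_zero_right] at this
              have := this.trans (ht_mono hej)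
              linarith
          have hee : e x = j + 1 := le_antisymm heub helb
          rw [hχx] at h1
          rw [hee]
          have : δ (j+1) = μ (j+1) * ((2:ℝ)⁻¹ ^ ((j+1)+1) - (2:ℝ)⁻¹ ^ (j+3)) := by
            simp only [hδdef]
            rw [show j+1+2 = j+3 by omega, show j+1+1 = j+2 by omega,
              show j+3 = (j+2)+1 by omega, pow_succ]
            ring
          simp only [zero_mul, add_zero] at h1
          calc ‖s' x - f x‖ < δ (j+1) := h1
            _ = μ (j+1) * ((2:ℝ)⁻¹ ^ ((j+1)+1) - (2:ℝ)⁻¹ ^ (j+3)) := this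
    · -- increment bound
      intro x hx
      have hxcore : x ∈ core := Or.inl hx
      have hxD : x ∈ D := hcoreD hxcore
      rw [Metric.mem_closedBall, dist_zero_right] at hx
      have hxnorm : ‖x‖ ≤ R' := by rw [hR'def]; linarith
      have := hs'b x hxD
      rw [hGeq x hxnorm] at this
      exact this
  -- construct the sequence
  obtain ⟨s0, hs0⟩ := base
  choose st hst using step
  set S : ℕ → (Fin n → ℂ) → ℂ := fun j => Nat.rec s0 st j with hSdef
  have hSsucc : ∀ j, S (j+1) = st j (S j) := fun j => rfl
  have hSInv : ∀ j, Inv j (S j) := by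
    intro j
    induction j with
    | zero => exact hs0
    | succ j ih =>
      rw [hSsucc]
      exact (hst j (S j) ih).1
  have hSinc : ∀ j, ∀ x ∈ Metric.closedBall (0 : Fin n → ℂ) (r (j+1)),
      ‖S (j+1) x - S j x‖ < δ (j+1) := by
    intro j
    rw [hSsucc]
    exact (hst j (S j) (hSInv j)).2
  -- pass to the limit
  have hdiffS : ∀ j, Differentiable ℂ (S j) := fun j => (hSInv j).1
  have hincS : ∀ j : ℕ, ∀ z : Fin n → ℂ, ‖z‖ ≤ (j:ℝ) → ‖S (j+1) z - S j z‖ ≤ (2:ℝ)⁻¹ ^ j := by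
    intro j z hz
    have hzball : z ∈ Metric.closedBall (0 : Fin n → ℂ) (r (j+1)) := by
      rw [Metric.mem_closedBall, dist_zero_right]
      simp only [hrdef]
      push_cast; linarith
    have h1 := hSinc j z hzball
    have h2 : δ (j+1) ≤ (2:ℝ)⁻¹ ^ j := by
      simp only [hδdef]
      have h3 : (0:ℝ) ≤ (2:ℝ)⁻¹ ^ (j+1+2) := by positivity
      have h4 : μ (j+1) * (2:ℝ)⁻¹ ^ (j+1+2) ≤ (2:ℝ)⁻¹ ^ (j+1+2) := by
        nlinarith [hμ_le_one (j+1), hμ_pos (j+1)]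
      have h5 : ((2:ℝ)⁻¹ ^ (j+1+2) : ℝ) ≤ (2:ℝ)⁻¹ ^ j := by
        apply pow_le_pow_of_le_one (by norm_num) (by norm_num)
        omega
      linarith
    linarith
  obtain ⟨g, hgdiff, hgtend⟩ := CarlAux.entire_limit S hdiffS hincS
  refine ⟨g, hgdiff, ?_⟩
  intro x hx
  set i : ℕ := e x with hidef
  have hxRegi : x ∈ Reg i := he_mem x (hex x hx)
  have hbound : ∀ j, i ≤ j → ‖S j x - f x‖ ≤ μ i * (2:ℝ)⁻¹ ^ (i+1) := by
    intro j hij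
    have hxRegj : x ∈ Reg j := hRegMono i j hij hxRegi
    have := (hSInv j).2 x hxRegj
    rw [← hidef] at this
    have h3 : (0:ℝ) ≤ (2:ℝ)⁻¹ ^ (j+2) := by positivity
    nlinarith [hμ_pos i]
  have hlim : Filter.Tendsto (fun j => ‖S j x - f x‖) Filter.atTop (nhds ‖g x - f x‖) :=
    ((hgtend x).sub tendsto_const_nhds).norm
  have hgb : ‖g x - f x‖ ≤ μ i * (2:ℝ)⁻¹ ^ (i+1) := by
    refine le_of_tendsto hlim ?_
    rw [Filter.eventually_atTop]
    exact ⟨i, hbound⟩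
  have h1 : μ i * (2:ℝ)⁻¹ ^ (i+1) ≤ m i * (2:ℝ)⁻¹ := by
    have h2 : ((2:ℝ)⁻¹ ^ (i+1) : ℝ) ≤ (2:ℝ)⁻¹ := by
      calc ((2:ℝ)⁻¹ ^ (i+1) : ℝ) ≤ (2:ℝ)⁻¹ ^ 1 :=
        pow_le_pow_of_le_one (by norm_num) (by norm_num) (by omega)
        _ = (2:ℝ)⁻¹ := pow_one _
    have h3 : (0:ℝ) ≤ (2:ℝ)⁻¹ ^ (i+1) := by positivity
    nlinarith [hμ_le_m i, hμ_pos i, hm_pos i]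
  have h4 : m i * (2:ℝ)⁻¹ < m i := by
    have := hm_pos i
    linarith
  have h5 : m i ≤ ε x := hm_le i x hxRegi
  linarith
end
end
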